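/- Let x ∈ (0,1) be irrational with negative continued fraction convergents P_n/Q_n. Then for every n ≥ 1, 1/(Q_n Q_{n−1}) < |x − P_{n−1}/Q_{n−1}| < 1/(Q_{n−1}(Q_n − Q_{n−1})). -/

import Mathlib

open MeasureTheory Filter Real

/-- The negative continued fraction map `T(y) = -1/y - ⌊-1/y⌋` (with `T 0 = 0`). -/
noncomputable def negT (y : ℝ) : ℝ := Int.fract (-1 / y)

/-- The `n`-th negative continued fraction digit `a'_n(x) = ⌈1 / T^{n-1}(1-x)⌉`. -/
noncomputable def negDigit (x : ℝ) (n : ℕ) : ℕ := (⌈1 / negT^[n - 1] (1 - x)⌉).toNat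

noncomputable def negP (x : ℝ) : ℕ → ℤ
  | 0 => 1
  | 1 => 1
  | n + 2 => negDigit x (n + 1) * negP x (n + 1) - negP x n

noncomputable def negQ (x : ℝ) : ℕ → ℤ
  | 0 => 0
  | 1 => 1
  | n + 2 => negDigit x (n + 1) * negQ x (n + 1) - negQ x n

lemma negT_step {y : ℝ} (hy : y ∈ Set.Ioo (0:ℝ) 1) (hirr : Irrational y) :
    negT y ∈ Set.Ioo (0:ℝ) 1 ∧ Irrational (negT y) := by
  have h1 : Irrational (-1 / y) := by
    have : Irrational (-(y⁻¹)) := hirr.inv.neg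
    simpa [neg_div, one_div] using this
  have h2 : Irrational (negT y) := by
    have : negT y = -1 / y - (⌊-1 / y⌋ : ℤ) := rfl
    rw [this]
    exact h1.sub_intCast _
  have h0 : negT y ≠ 0 := by
    intro h
    rw [h] at h2
    exact Int.not_irrational 0 (by exact_mod_cast h2)
  exact ⟨⟨lt_of_le_of_ne (Int.fract_nonneg _) (Ne.symm h0), Int.fract_lt_one _⟩, h2⟩

variable {x : ℝ}

lemma Y_mem (hx : x ∈ Set.Ioo (0:ℝ) 1) (hirr : Irrational x) (n : ℕ) :
    negT^[n] (1-x) ∈ Set.Ioo (0:ℝ) 1 ∧ Irrational (negT^[n] (1-x)) := by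
  induction n with
  | zero =>
    refine ⟨⟨?_, ?_⟩, ?_⟩
    · simp only [Function.iterate_zero_apply]; linarith [hx.2]
    · simp only [Function.iterate_zero_apply]; linarith [hx.1]
    · simp only [Function.iterate_zero_apply]
      have : Irrational ((1:ℤ) - x) := hirr.intCast_sub 1
      simpa using this
  | succ n ih =>
    rw [Function.iterate_succ_apply']
    exact negT_step ih.1 ih.2

lemma ceil_ge (hx : x ∈ Set.Ioo (0:ℝ) 1) (hirr : Irrational x) (n : ℕ) :
    2 ≤ ⌈1 / negT^[n] (1-x)⌉ := by
  obtain ⟨⟨h0, h1⟩, _⟩ := Y_mem hx hirr n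
  have hlt : (1:ℝ) < 1 / negT^[n] (1-x) := by
    rw [lt_div_iff₀ h0]; linarith
  have := Int.lt_ceil.mpr (show ((1:ℤ):ℝ) < 1 / negT^[n] (1-x) by exact_mod_cast hlt)
  omega

lemma digit_cast (hx : x ∈ Set.Ioo (0:ℝ) 1) (hirr : Irrational x) (n : ℕ) :
    (negDigit x (n+1) : ℤ) = ⌈1 / negT^[n] (1-x)⌉ := by
  have := ceil_ge hx hirr n
  simp only [negDigit, Nat.add_sub_cancel]
  rw [Int.toNat_of_nonneg (by omega)]

lemma digit_two (hx : x ∈ Set.Ioo (0:ℝ) 1) (hirr : Irrational x) (n : ℕ) :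
    2 ≤ (negDigit x (n+1) : ℤ) := by
  rw [digit_cast hx hirr]; exact ceil_ge hx hirr n

lemma Y_succ (hx : x ∈ Set.Ioo (0:ℝ) 1) (hirr : Irrational x) (n : ℕ) :
    negT^[n+1] (1-x) = (negDigit x (n+1) : ℝ) - 1 / negT^[n] (1-x) := by
  rw [Function.iterate_succ_apply']
  have hcast : ((negDigit x (n+1) : ℝ)) = ((⌈1 / negT^[n] (1-x)⌉ : ℤ) : ℝ) := by
    exact_mod_cast digit_cast hx hirr n
  rw [hcast]
  have h1 : negT (negT^[n] (1-x)) = -1 / negT^[n] (1-x) - (⌊-1 / negT^[n] (1-x)⌋ : ℤ) := rfl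
  have h2 : ⌊-1 / negT^[n] (1-x)⌋ = -⌈1 / negT^[n] (1-x)⌉ := by
    rw [neg_div, Int.floor_neg]
  rw [h1, h2]
  push_cast
  ring

lemma negQ_mono (hx : x ∈ Set.Ioo (0:ℝ) 1) (hirr : Irrational x) (n : ℕ) :
    0 ≤ negQ x n ∧ negQ x n < negQ x (n+1) := by
  induction n with
  | zero => exact ⟨le_refl 0, by norm_num [negQ]⟩
  | succ n ih =>
    obtain ⟨h0, h1⟩ := ih
    refine ⟨by linarith, ?_⟩
    have hd := digit_two hx hirr n
    have hQ : negQ x (n+2) = (negDigit x (n+1) : ℤ) * negQ x (n+1) - negQ x n := rfl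
    rw [hQ]
    nlinarith

lemma negQ_pos (hx : x ∈ Set.Ioo (0:ℝ) 1) (hirr : Irrational x) {n : ℕ} (hn : 1 ≤ n) :
    1 ≤ negQ x n := by
  induction n with
  | zero => omega
  | succ n ih =>
    rcases Nat.eq_zero_or_pos n with h | h
    · subst h; norm_num [negQ]
    · have := (negQ_mono hx hirr n).2
      linarith [ih h]

lemma key_id (hx : x ∈ Set.Ioo (0:ℝ) 1) (hirr : Irrational x) (n : ℕ) :
    x * ((negQ x (n+1) : ℝ) - (negQ x n : ℝ) * negT^[n] (1-x))
      = (negP x (n+1) : ℝ) - (negP x n : ℝ) * negT^[n] (1-x) := by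
  induction n with
  | zero => simp [negP, negQ]
  | succ n ih =>
    have hy0 : negT^[n] (1-x) ≠ 0 := ne_of_gt (Y_mem hx hirr n).1.1
    have hrec := Y_succ hx hirr n
    have hQ : (negQ x (n+2) : ℝ) = (negDigit x (n+1) : ℝ) * (negQ x (n+1) : ℝ) - (negQ x n : ℝ) := by
      have : negQ x (n+2) = (negDigit x (n+1) : ℤ) * negQ x (n+1) - negQ x n := rfl
      rw [this]; push_cast; ring
    have hP : (negP x (n+2) : ℝ) = (negDigit x (n+1) : ℝ) * (negP x (n+1) : ℝ) - (negP x n : ℝ) := by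
      have : negP x (n+2) = (negDigit x (n+1) : ℤ) * negP x (n+1) - negP x n := rfl
      rw [this]; push_cast; ring
    rw [hQ, hP, hrec]
    field_simp
    linear_combination ih

lemma det_id (n : ℕ) :
    negP x (n+1) * negQ x n - negP x n * negQ x (n+1) = -1 := by
  induction n with
  | zero => simp [negP, negQ]
  | succ n ih =>
    have hP : negP x (n+2) = (negDigit x (n+1) : ℤ) * negP x (n+1) - negP x n := rfl
    have hQ : negQ x (n+2) = (negDigit x (n+1) : ℤ) * negQ x (n+1) - negQ x n := rfl
    rw [hP, hQ]
    linear_combination ih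

/-- Approximation quality of negative continued fraction convergents:
`1/(Qₙ Qₙ₋₁) < |x - Pₙ₋₁/Qₙ₋₁| < 1/(Qₙ₋₁ (Qₙ - Qₙ₋₁))` for all `n ≥ 1`.
(Recall `negP x n = P_{n-1}` and `negQ x n = Q_{n-1}` with the index shift.) -/
theorem negCF_approx_bounds (x : ℝ) (hx : x ∈ Set.Ioo (0 : ℝ) 1) (hirr : Irrational x)
    (n : ℕ) (hn : 1 ≤ n) :
    1 / ((negQ x (n + 1) : ℝ) * (negQ x n : ℝ)) < |x - (negP x n : ℝ) / (negQ x n : ℝ)| ∧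
    |x - (negP x n : ℝ) / (negQ x n : ℝ)| <
      1 / ((negQ x n : ℝ) * ((negQ x (n + 1) : ℝ) - (negQ x n : ℝ))) := by
  set y := negT^[n] (1-x) with hy_def
  obtain ⟨⟨hy0, hy1⟩, _⟩ := Y_mem hx hirr n
  have hQ1 : (1:ℤ) ≤ negQ x n := negQ_pos hx hirr hn
  have hQQ' : negQ x n < negQ x (n+1) := (negQ_mono hx hirr n).2
  have hQr : (0:ℝ) < (negQ x n : ℝ) := by exact_mod_cast lt_of_lt_of_le zero_lt_one hQ1
  have hQQ'r : ((negQ x n : ℝ)) < (negQ x (n+1) : ℝ) := by exact_mod_cast hQQ'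
  have hd_gt : (negQ x (n+1) : ℝ) - (negQ x n : ℝ) < (negQ x (n+1) : ℝ) - (negQ x n : ℝ) * y := by
    nlinarith
  have hd_lt : (negQ x (n+1) : ℝ) - (negQ x n : ℝ) * y < (negQ x (n+1) : ℝ) := by nlinarith
  have hd_pos : 0 < (negQ x (n+1) : ℝ) - (negQ x n : ℝ) * y := by linarith
  have hdet : ((negP x (n+1) : ℝ)) * (negQ x n : ℝ) - (negP x n : ℝ) * (negQ x (n+1) : ℝ) = -1 := by
    exact_mod_cast det_id (x := x) n
  have hkey := key_id hx hirr n
  have h1 : (x * (negQ x n : ℝ) - (negP x n : ℝ)) * ((negQ x (n+1) : ℝ) - (negQ x n : ℝ) * y) = -1 := by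
    linear_combination (negQ x n : ℝ) * hkey + hdet
  have hdne : ((negQ x (n+1) : ℝ) - (negQ x n : ℝ) * y) ≠ 0 := ne_of_gt hd_pos
  have h2 : x * (negQ x n : ℝ) - (negP x n : ℝ)
      = -1 / ((negQ x (n+1) : ℝ) - (negQ x n : ℝ) * y) := by
    rw [eq_div_iff hdne]; linear_combination h1
  have h3 : x - (negP x n : ℝ) / (negQ x n : ℝ)
      = (x * (negQ x n : ℝ) - (negP x n : ℝ)) / (negQ x n : ℝ) := by
    field_simp
  have heq : x - (negP x n : ℝ) / (negQ x n : ℝ)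
      = -1 / (((negQ x (n+1) : ℝ) - (negQ x n : ℝ) * y) * (negQ x n : ℝ)) := by
    rw [h3, h2, div_div]
  rw [heq, abs_div, abs_neg, abs_one, abs_of_pos (mul_pos hd_pos hQr)]
  constructor
  · apply div_lt_div_of_pos_left one_pos (mul_pos hd_pos hQr)
    nlinarith
  · apply div_lt_div_of_pos_left one_pos (mul_pos hQr (by linarith))
    nlinarith
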